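/- In the q-shuffle algebra V, for all n ∈ ℕ: Σ_{k=0}^{n} q^{2k−n} G_{n−k} ⋆ W_{−k} = Σ_{k=0}^{n} q^{n−2k} W_{−k} ⋆ G_{n−k}, and this common value equals [2]_q^n (xy+yx)^n x, where [2]_q = q + q⁻¹ and the power (xy+yx)^n and the final multiplication by x are taken in the free (concatenation) algebra. -/

import Mathlib

noncomputable section

/-- Words in the letters `x` (= `false`) and `y` (= `true`). -/
abbrev Wd := List Bool

/-- The underlying vector space of the free algebra `F⟨x,y⟩`,
with the words as a basis. -/
abbrev V (F : Type*) [Field F] := Wd →₀ F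

/-- The pairing `⟨u,v⟩` on letters: `2` if equal, `-2` if distinct. -/
def pr (a b : Bool) : ℤ := if a = b then 2 else -2

/-- `⟨u₁,b⟩ + ⟨u₂,b⟩ + ⋯ + ⟨u_r,b⟩` for a word `u` and a letter `b`. -/
def wsum (u : Wd) (b : Bool) : ℤ := (u.map fun a => pr a b).sum

variable {F : Type*} [Field F]

/-- Left multiplication by a letter, in the free (concatenation) algebra. -/
def lmul (a : Bool) (f : V F) : V F := Finsupp.mapDomain (fun w => a :: w) f

/-- The `q`-shuffle product of two words (as an element of `V F`), defined by
Rosso's recursion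
`u ⋆ v = u₁((u₂⋯u_r) ⋆ v) + q^{⟨u₁,v₁⟩+⋯+⟨u_r,v₁⟩} v₁(u ⋆ (v₂⋯v_s))`. -/
def sh (q : F) : Wd → Wd → V F
  | [], v => Finsupp.single v 1
  | u@(_ :: _), [] => Finsupp.single u 1
  | a :: u', b :: v' =>
      lmul a (sh q u' (b :: v')) +
        q ^ wsum (a :: u') b • lmul b (sh q (a :: u') v')
  termination_by u v => u.length + v.length
  decreasing_by all_goals (simp only [List.length_cons]; omega)

/-- The `q`-shuffle product on `V F`, extended bilinearly from words. -/
def st (q : F) (f g : V F) : V F :=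
  f.sum fun u cu => g.sum fun v cv => (cu * cv) • sh q u v

/-- The concatenation (free-algebra) product on `V F`. -/
def cm (f g : V F) : V F :=
  f.sum fun u cu => g.sum fun v cv => Finsupp.single (u ++ v) (cu * cv)

/-- Powers with respect to the concatenation product. -/
def cpow (f : V F) : ℕ → V F
  | 0 => Finsupp.single [] 1
  | n + 1 => cm f (cpow f n)

/-- The alternating word `W_{-k} = xyx⋯x` of length `2k+1`. -/
def altX : ℕ → Wd
  | 0 => [false]
  | k + 1 => false :: true :: altX k

/-- The alternating word `W_{k+1} = yxy⋯y` of length `2k+1`. -/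
def altY : ℕ → Wd
  | 0 => [true]
  | k + 1 => true :: false :: altY k

/-- The alternating word `G_k = (yx)^k`. -/
def gw : ℕ → Wd
  | 0 => []
  | k + 1 => true :: false :: gw k

/-- The alternating word `G̃_k = (xy)^k`. -/
def gtw : ℕ → Wd
  | 0 => []
  | k + 1 => false :: true :: gtw k

/-- `W_{-k}` as an element of `V F`. -/
def Wm (F : Type*) [Field F] (k : ℕ) : V F := Finsupp.single (altX k) 1

/-- `W_{k+1}` as an element of `V F`. -/
def Wp (F : Type*) [Field F] (k : ℕ) : V F := Finsupp.single (altY k) 1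

/-- `G_k` as an element of `V F`. -/
def Gn (F : Type*) [Field F] (k : ℕ) : V F := Finsupp.single (gw k) 1

/-- `G̃_k` as an element of `V F`. -/
def Gt (F : Type*) [Field F] (k : ℕ) : V F := Finsupp.single (gtw k) 1


section AuxLemmas
variable {F : Type*} [Field F]

lemma altX_eq (k : ℕ) : altX k = false :: gw k := by
  induction k with
  | zero => rfl
  | succ k ih => rw [altX, gw, ih]

lemma gw_succ_eq (k : ℕ) : gw (k+1) = true :: altX k := by rw [gw, altX_eq]

lemma wsum_cons (a : Bool) (u : Wd) (b : Bool) : wsum (a::u) b = pr a b + wsum u b := by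
  simp [wsum]

lemma wsum_gw (k : ℕ) (b : Bool) : wsum (gw k) b = 0 := by
  induction k with
  | zero => rfl
  | succ k ih => rw [gw, wsum_cons, wsum_cons, ih]; cases b <;> simp [pr]

lemma wsum_altX (k : ℕ) (b : Bool) : wsum (altX k) b = pr false b := by
  rw [altX_eq, wsum_cons, wsum_gw, add_zero]

lemma lmul_add (a : Bool) (f g : V F) : lmul a (f+g) = lmul a f + lmul a g :=
  Finsupp.mapDomain_add

lemma lmul_smul (a : Bool) (c : F) (f : V F) : lmul a (c • f) = c • lmul a f :=
  Finsupp.mapDomain_smul c f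

lemma lmul_single (a : Bool) (u : Wd) (c : F) :
    lmul a (Finsupp.single u c) = Finsupp.single (a::u) c :=
  Finsupp.mapDomain_single

lemma lmul_sum {ι : Type*} (a : Bool) (s : Finset ι) (f : ι → V F) :
    lmul a (∑ i ∈ s, f i) = ∑ i ∈ s, lmul a (f i) :=
  map_sum (Finsupp.mapDomain.addMonoidHom _) _ _

lemma sh_nil_left (q : F) (v : Wd) : sh q [] v = Finsupp.single v 1 := by simp [sh]

lemma sh_nil_right (q : F) (a : Bool) (u : Wd) : sh q (a::u) [] = Finsupp.single (a::u) 1 := by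
  simp [sh]

lemma shA (q : F) (j k : ℕ) : sh q (altX j) (altX k) =
    lmul false (sh q (gw j) (altX k)) + q^(2:ℤ) • lmul false (sh q (altX j) (gw k)) := by
  conv_lhs => rw [altX_eq j, altX_eq k, sh]
  rw [← altX_eq j, ← altX_eq k, wsum_altX]
  norm_num [pr]

lemma shB (q : F) (j k : ℕ) : sh q (gw (j+1)) (altX k) =
    lmul true (sh q (altX j) (altX k)) + lmul false (sh q (gw (j+1)) (gw k)) := by
  conv_lhs => rw [gw_succ_eq j, altX_eq k, sh]
  rw [← altX_eq k, ← gw_succ_eq j, wsum_gw]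
  norm_num

lemma shC (q : F) (j k : ℕ) : sh q (altX j) (gw (k+1)) =
    lmul false (sh q (gw j) (gw (k+1))) + q^(-2:ℤ) • lmul true (sh q (altX j) (altX k)) := by
  conv_lhs => rw [altX_eq j, gw_succ_eq k, sh]
  rw [← altX_eq j, ← gw_succ_eq k, wsum_altX]
  norm_num [pr]

lemma shD (q : F) (j k : ℕ) : sh q (gw (j+1)) (gw (k+1)) =
    lmul true (sh q (altX j) (gw (k+1))) + lmul true (sh q (gw (j+1)) (altX k)) := by
  conv_lhs => rw [gw_succ_eq j, gw_succ_eq k, sh]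
  rw [← gw_succ_eq j, ← gw_succ_eq k, wsum_gw]
  norm_num

end AuxLemmas
section CmLemmas
variable {F : Type*} [Field F]

lemma st_single (q : F) (u v : Wd) :
    st q (Finsupp.single u (1:F)) (Finsupp.single v 1) = sh q u v := by
  rw [st, Finsupp.sum_single_index, Finsupp.sum_single_index] <;> simp

lemma cm_zero_left (g : V F) : cm 0 g = 0 := by simp [cm]

lemma cm_add_left (f g h : V F) : cm (f+g) h = cm f h + cm g h := by
  refine Finsupp.sum_add_index' (fun u => ?_) (fun u c1 c2 => ?_)
  · simp
  · rw [← Finsupp.sum_add]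
    congr 1
    ext v cv
    rw [add_mul, Finsupp.single_add]

lemma cm_single_one (u : Wd) (g : V F) :
    cm (Finsupp.single u (1:F)) g = Finsupp.mapDomain (u ++ ·) g := by
  rw [cm, Finsupp.sum_single_index]
  · simp [Finsupp.mapDomain]
  · simp

lemma cm_mapDomain (u : Wd) (f g : V F) :
    cm (Finsupp.mapDomain (fun w => u ++ w) f) g =
      Finsupp.mapDomain (fun w => u ++ w) (cm f g) := by
  induction f using Finsupp.induction_linear with
  | zero => simp [cm_zero_left]
  | add f1 f2 h1 h2 => rw [Finsupp.mapDomain_add, cm_add_left, h1, h2, cm_add_left,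
      Finsupp.mapDomain_add]
  | single v c =>
    rw [Finsupp.mapDomain_single, cm, cm, Finsupp.sum_single_index (by simp),
      Finsupp.sum_single_index (by simp), Finsupp.mapDomain_sum]
    refine Finsupp.sum_congr fun w _ => ?_
    rw [Finsupp.mapDomain_single, List.append_assoc]

end CmLemmas
section Sums
variable {F : Type*} [Field F]

/-- mapDomain by two-letter prepend is iterated lmul -/
lemma mapDomain_two (a b : Bool) (X : V F) :
    Finsupp.mapDomain (fun w : Wd => a :: b :: w) X = lmul a (lmul b X) := by
  rw [lmul, lmul, ← Finsupp.mapDomain_comp]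
  rfl

/-- the target word sum -/
def Pw (F : Type*) [Field F] (n : ℕ) : V F := cm (cpow (Gt F 1 + Gn F 1) n) (Wm F 0)

lemma Pw_zero : Pw F 0 = Finsupp.single [false] 1 := by
  rw [Pw, cpow, cm_single_one]
  rw [Wm, Finsupp.mapDomain_single]
  rfl

lemma Pw_succ (n : ℕ) :
    Pw F (n+1) = lmul false (lmul true (Pw F n)) + lmul true (lmul false (Pw F n)) := by
  have h1 : cpow (Gt F 1 + Gn F 1) (n+1) = cm (Gt F 1 + Gn F 1) (cpow (Gt F 1 + Gn F 1) n) := rfl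
  have h2 : cm (Gt F 1 + Gn F 1) (cpow (Gt F 1 + Gn F 1) n)
      = Finsupp.mapDomain (fun w : Wd => [false, true] ++ w) (cpow (Gt F 1 + Gn F 1) n)
        + Finsupp.mapDomain (fun w : Wd => [true, false] ++ w) (cpow (Gt F 1 + Gn F 1) n) := by
    rw [cm_add_left, Gt, Gn, cm_single_one, cm_single_one]
    rfl
  rw [Pw, h1, h2, cm_add_left, cm_mapDomain, cm_mapDomain]
  rw [show (fun w : Wd => [false, true] ++ w) = (fun w : Wd => false :: true :: w) from rfl]
  rw [show (fun w : Wd => [true, false] ++ w) = (fun w : Wd => true :: false :: w) from rfl]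
  rw [mapDomain_two, mapDomain_two]
  rfl

/-- `S(n) = Σ q^{2k-n} sh(G_{n-k}, W_{-k})` -/
def Ssum (q : F) (n : ℕ) : V F :=
  ∑ k ∈ Finset.range (n+1), q ^ (2*(k:ℤ) - (n:ℤ)) • sh q (gw (n-k)) (altX k)

/-- reflected form of `T(n)` -/
def Trefl (q : F) (n : ℕ) : V F :=
  ∑ k ∈ Finset.range (n+1), q ^ (2*(k:ℤ) - (n:ℤ)) • sh q (altX (n-k)) (gw k)

def Usum (q : F) (n : ℕ) : V F :=
  ∑ k ∈ Finset.range (n+1), q ^ (2*(k:ℤ) - (n:ℤ)) • sh q (altX (n-k)) (altX k)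

def Vsum (q : F) (n : ℕ) : V F :=
  ∑ k ∈ Finset.range (n+1), q ^ (2*(k:ℤ) - (n:ℤ)) • sh q (gw (n-k)) (gw k)

lemma smul_shift {q : F} (hq : q ≠ 0) {a b c : ℤ} (h : a = b + c) (x : V F) :
    q^a • x = q^b • (q^c • x) := by rw [h, zpow_add₀ hq, mul_smul]

end Sums
section Recursions
variable {F : Type*} [Field F]

lemma smul_merge {q : F} (hq : q ≠ 0) (b c : ℤ) (x : V F) :
    q^b • (q^c • x) = q^(b+c) • x := by rw [zpow_add₀ hq, mul_smul]

lemma hU_expand (q : F) (n : ℕ) :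
    lmul true (Usum q n)
      = ∑ k ∈ Finset.range (n+1),
          q ^ (2*(k:ℤ) - (n:ℤ)) • lmul true (sh q (altX (n-k)) (altX k)) := by
  rw [Usum, lmul_sum]
  exact Finset.sum_congr rfl fun k _ => by rw [lmul_smul]

/-- `Vsum (n+1)` with the top (`k = n+1`) term peeled off, under `lmul false`. -/
lemma hV_expand (q : F) (n : ℕ) :
    lmul false (Vsum q (n+1))
      = (∑ k ∈ Finset.range (n+1),
          q ^ (2*(k:ℤ) - ((n:ℤ)+1)) • lmul false (sh q (gw (n+1-k)) (gw k)))
        + q ^ ((n:ℤ)+1) • Finsupp.single (altX (n+1)) 1 := by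
  rw [Vsum, Finset.sum_range_succ, lmul_add, lmul_sum]
  simp only [Nat.cast_add, Nat.cast_one]
  congr 1
  · exact Finset.sum_congr rfl fun k _ => by rw [lmul_smul]
  · rw [lmul_smul, Nat.sub_self, show gw 0 = ([] : Wd) from rfl, sh_nil_left, lmul_single,
      ← altX_eq]
    congr 1
    ring

/-- `Vsum (n+1)` with the bottom (`k = 0`) term peeled off, under `lmul false`. -/
lemma hV_expand' (q : F) (n : ℕ) :
    lmul false (Vsum q (n+1))
      = (∑ k ∈ Finset.range (n+1),
          q ^ (2*((k:ℤ)+1) - ((n:ℤ)+1)) • lmul false (sh q (gw (n-k)) (gw (k+1))))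
        + q ^ (-(n:ℤ)-1) • Finsupp.single (altX (n+1)) 1 := by
  rw [Vsum, Finset.sum_range_succ', lmul_add, lmul_sum]
  simp only [Nat.cast_add, Nat.cast_one, Nat.cast_zero, Nat.succ_sub_succ, Nat.sub_zero]
  congr 1
  · exact Finset.sum_congr rfl fun k _ => by rw [lmul_smul]
  · rw [lmul_smul, show gw 0 = ([] : Wd) from rfl, gw_succ_eq, sh_nil_right,
      ← gw_succ_eq, lmul_single, ← altX_eq]
    congr 1
    ring

lemma Ssum_succ {q : F} (hq : q ≠ 0) (n : ℕ) :
    Ssum q (n+1) = q^(-1:ℤ) • lmul true (Usum q n) + lmul false (Vsum q (n+1)) := by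
  have key : ∀ k ∈ Finset.range (n+1),
      q ^ (2*(k:ℤ) - ((n:ℤ)+1)) • sh q (gw (n+1-k)) (altX k)
      = q^(-1:ℤ) • (q ^ (2*(k:ℤ) - (n:ℤ)) • lmul true (sh q (altX (n-k)) (altX k)))
        + q ^ (2*(k:ℤ) - ((n:ℤ)+1)) • lmul false (sh q (gw (n+1-k)) (gw k)) := by
    intro k hk
    have hk' : k ≤ n := Nat.lt_succ_iff.mp (Finset.mem_range.mp hk)
    have h2 : n + 1 - k = (n - k) + 1 := by omega
    rw [h2, shB, smul_add, ← h2, smul_merge hq,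
      show (-1:ℤ) + (2*(k:ℤ) - (n:ℤ)) = 2*(k:ℤ) - ((n:ℤ)+1) by ring]
  rw [Ssum, Finset.sum_range_succ]
  simp only [Nat.cast_add, Nat.cast_one]
  rw [Finset.sum_congr rfl key, Finset.sum_add_distrib, hU_expand, Finset.smul_sum,
    hV_expand]
  simp only [smul_merge hq]
  rw [Nat.sub_self, show gw 0 = ([] : Wd) from rfl, sh_nil_left,
    show 2*((n:ℤ)+1) - ((n:ℤ)+1) = (n:ℤ)+1 by ring]
  abel

lemma Trefl_succ {q : F} (hq : q ≠ 0) (n : ℕ) :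
    Trefl q (n+1) = q^(-1:ℤ) • lmul true (Usum q n) + lmul false (Vsum q (n+1)) := by
  have key : ∀ k ∈ Finset.range (n+1),
      q ^ (2*((k:ℤ)+1) - ((n:ℤ)+1)) • sh q (altX (n-k)) (gw (k+1))
      = q ^ (2*((k:ℤ)+1) - ((n:ℤ)+1)) • lmul false (sh q (gw (n-k)) (gw (k+1)))
        + q ^ ((-1:ℤ) + (2*(k:ℤ) - (n:ℤ))) • lmul true (sh q (altX (n-k)) (altX k)) := by
    intro k hk
    rw [shC, smul_add, smul_merge hq,
      show 2*((k:ℤ)+1) - ((n:ℤ)+1) + -2 = (-1:ℤ) + (2*(k:ℤ) - (n:ℤ)) by ring]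
  rw [Trefl, Finset.sum_range_succ']
  simp only [Nat.cast_add, Nat.cast_one, Nat.cast_zero, Nat.succ_sub_succ, Nat.sub_zero]
  rw [Finset.sum_congr rfl key, Finset.sum_add_distrib, hU_expand, Finset.smul_sum,
    hV_expand']
  simp only [smul_merge hq]
  rw [show gw 0 = ([] : Wd) from rfl, altX_eq (n+1), sh_nil_right, ← altX_eq,
    show 2*(0:ℤ) - ((n:ℤ)+1) = -(n:ℤ)-1 by ring]
  abel

end Recursions
section VRec
variable {F : Type*} [Field F]

lemma Vsum_succ {q : F} (hq : q ≠ 0) (n : ℕ) :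
    Vsum q (n+1) = q^(1:ℤ) • lmul true (Ssum q n) + q^(-1:ℤ) • lmul true (Trefl q n) := by
  have key : ∀ k ∈ Finset.range n,
      q ^ (2*((k:ℤ)+1) - ((n:ℤ)+1)) • sh q (gw (n-k)) (gw (k+1))
      = q ^ ((-1:ℤ) + (2*((k:ℤ)+1) - (n:ℤ))) • lmul true (sh q (altX (n-(k+1))) (gw (k+1)))
        + q ^ ((1:ℤ) + (2*(k:ℤ) - (n:ℤ))) • lmul true (sh q (gw (n-k)) (altX k)) := by
    intro k hk
    have hk' : k < n := Finset.mem_range.mp hk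
    have h2 : n - k = (n-(k+1)) + 1 := by omega
    rw [h2, shD, ← h2, smul_add]
    rw [show 2*((k:ℤ)+1) - ((n:ℤ)+1) = (-1:ℤ) + (2*((k:ℤ)+1) - (n:ℤ)) by ring]
    congr 2
    ring
  have hS : q^(1:ℤ) • lmul true (Ssum q n)
      = (∑ k ∈ Finset.range n,
          q ^ ((1:ℤ) + (2*(k:ℤ) - (n:ℤ))) • lmul true (sh q (gw (n-k)) (altX k)))
        + q ^ ((1:ℤ)+(n:ℤ)) • Finsupp.single (gw (n+1)) 1 := by
    rw [Ssum, Finset.sum_range_succ, lmul_add, lmul_sum, smul_add, Finset.smul_sum]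
    congr 1
    · exact Finset.sum_congr rfl fun k _ => by rw [lmul_smul, smul_merge hq]
    · rw [Nat.sub_self, show gw 0 = ([] : Wd) from rfl, sh_nil_left, lmul_smul, lmul_single,
        ← gw_succ_eq, smul_merge hq, show (1:ℤ)+(2*(n:ℤ)-(n:ℤ)) = (1:ℤ)+(n:ℤ) by ring]
  have hT : q^(-1:ℤ) • lmul true (Trefl q n)
      = (∑ k ∈ Finset.range n,
          q ^ ((-1:ℤ) + (2*((k:ℤ)+1) - (n:ℤ))) • lmul true (sh q (altX (n-(k+1))) (gw (k+1))))
        + q ^ ((-1:ℤ)-(n:ℤ)) • Finsupp.single (gw (n+1)) 1 := by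
    rw [Trefl, Finset.sum_range_succ', lmul_add, lmul_sum, smul_add, Finset.smul_sum]
    simp only [Nat.cast_add, Nat.cast_one, Nat.cast_zero, Nat.sub_zero]
    congr 1
    · exact Finset.sum_congr rfl fun k _ => by rw [lmul_smul, smul_merge hq]
    · rw [show gw 0 = ([] : Wd) from rfl, altX_eq n, sh_nil_right, ← altX_eq, lmul_smul,
        lmul_single, ← gw_succ_eq, smul_merge hq,
        show (-1:ℤ)+(2*(0:ℤ)-(n:ℤ)) = (-1:ℤ)-(n:ℤ) by ring]
  rw [Vsum, Finset.sum_range_succ', Finset.sum_range_succ]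
  simp only [Nat.cast_add, Nat.cast_one, Nat.cast_zero, Nat.succ_sub_succ, Nat.sub_self,
    Nat.sub_zero]
  rw [Finset.sum_congr rfl key, Finset.sum_add_distrib, hS, hT]
  rw [show gw 0 = ([] : Wd) from rfl, sh_nil_left, gw_succ_eq n]
  rw [show sh q (true :: altX n) [] = Finsupp.single (true :: altX n) 1 from
    sh_nil_right q true (altX n), ← gw_succ_eq]
  rw [show 2*((n:ℤ)+1) - ((n:ℤ)+1) = (1:ℤ)+(n:ℤ) by ring,
    show 2*(0:ℤ) - ((n:ℤ)+1) = (-1:ℤ)-(n:ℤ) by ring]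
  abel

end VRec
section Main
variable {F : Type*} [Field F]

lemma Usum_eq (q : F) (n : ℕ) :
    Usum q n = lmul false (Ssum q n) + q^(2:ℤ) • lmul false (Trefl q n) := by
  rw [Usum, Ssum, Trefl, lmul_sum, lmul_sum, Finset.smul_sum, ← Finset.sum_add_distrib]
  refine Finset.sum_congr rfl fun k _ => ?_
  rw [shA, smul_add, lmul_smul, lmul_smul, smul_comm]

lemma main_ind {q : F} (hq : q ≠ 0) :
    ∀ n : ℕ, Ssum q n = Trefl q n ∧ Ssum q n = ((q+q⁻¹)^n) • Pw F n
  | 0 => by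
    constructor
    · rw [Ssum, Trefl]
      refine Finset.sum_congr rfl fun k hk => ?_
      simp only [Finset.mem_range] at hk
      have hk0 : k = 0 := by omega
      subst hk0
      simp only [Nat.sub_self]
      rw [show gw 0 = ([] : Wd) from rfl, sh_nil_left, altX_eq, sh_nil_right, ← altX_eq]
    · rw [Ssum, Finset.sum_range_one, Pw_zero, pow_zero, one_smul,
        show gw (0-0) = ([] : Wd) from rfl, sh_nil_left,
        show (2*((0:ℕ):ℤ) - ((0:ℕ):ℤ)) = 0 by norm_num, zpow_zero, one_smul]
      rfl
  | n+1 => by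
    obtain ⟨ih1, ih2⟩ := main_ind hq n
    have hV : Vsum q (n+1) = (q+q⁻¹) • lmul true (Ssum q n) := by
      rw [Vsum_succ hq, ← ih1, zpow_one, zpow_neg_one, add_smul]
    have hU2 : q^(-1:ℤ) • lmul true (Usum q n)
        = (q+q⁻¹) • lmul true (lmul false (Ssum q n)) := by
      rw [Usum_eq, ← ih1, lmul_add, lmul_smul, smul_add, smul_smul,
        ← zpow_add₀ hq]
      rw [show ((-1:ℤ)+2) = 1 by norm_num, zpow_one, zpow_neg_one, ← add_smul,
        add_comm q⁻¹ q]
    refine ⟨by rw [Ssum_succ hq, Trefl_succ hq], ?_⟩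
    calc Ssum q (n+1)
        = q^(-1:ℤ) • lmul true (Usum q n) + lmul false (Vsum q (n+1)) := Ssum_succ hq n
      _ = (q+q⁻¹) • (lmul false (lmul true (Ssum q n))
            + lmul true (lmul false (Ssum q n))) := by
          rw [hU2, hV, lmul_smul, smul_add, add_comm]
      _ = (q+q⁻¹) • ((q+q⁻¹)^n • (lmul false (lmul true (Pw F n))
            + lmul true (lmul false (Pw F n)))) := by
          rw [ih2, lmul_smul, lmul_smul, lmul_smul, lmul_smul]
          simp only [smul_add]
      _ = ((q+q⁻¹)^(n+1)) • Pw F (n+1) := by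
          rw [Pw_succ, smul_smul, ← pow_succ']

end Main


/-- `Σ_{k=0}^n q^{2k−n} G_{n−k} ⋆ W_{−k} = Σ_{k=0}^n q^{n−2k} W_{−k} ⋆ G_{n−k}
= [2]_q^n (xy+yx)^n x`. -/
theorem stmt_9 {F : Type*} [Field F] (q : F) (hq : q ≠ 0)
    (hq' : ∀ n : ℕ, 0 < n → q ^ n ≠ 1) (n : ℕ) :
    (∑ k ∈ Finset.range (n + 1),
        q ^ (2 * (k : ℤ) - (n : ℤ)) • st q (Gn F (n - k)) (Wm F k))
      = (∑ k ∈ Finset.range (n + 1),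
          q ^ ((n : ℤ) - 2 * (k : ℤ)) • st q (Wm F k) (Gn F (n - k))) ∧
    (∑ k ∈ Finset.range (n + 1),
        q ^ (2 * (k : ℤ) - (n : ℤ)) • st q (Gn F (n - k)) (Wm F k))
      = ((q + q⁻¹) ^ n) • cm (cpow (Gt F 1 + Gn F 1) n) (Wm F 0) := by
  have hL : (∑ k ∈ Finset.range (n + 1),
      q ^ (2 * (k : ℤ) - (n : ℤ)) • st q (Gn F (n - k)) (Wm F k)) = Ssum q n := by
    rw [Ssum]
    exact Finset.sum_congr rfl fun k _ => by rw [Gn, Wm, st_single]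
  have hR : (∑ k ∈ Finset.range (n + 1),
      q ^ ((n : ℤ) - 2 * (k : ℤ)) • st q (Wm F k) (Gn F (n - k))) = Trefl q n := by
    rw [Trefl, ← Finset.sum_range_reflect]
    refine Finset.sum_congr rfl fun k hk => ?_
    have hk' : k ≤ n := Nat.lt_succ_iff.mp (Finset.mem_range.mp hk)
    have e1 : n + 1 - 1 - k = n - k := by omega
    have e2 : n - (n - k) = k := by omega
    rw [e1, e2, Wm, Gn, st_single]
    congr 1
    rw [Nat.cast_sub hk']
    ring
  refine ⟨by rw [hL, hR, (main_ind hq n).1], by rw [hL, (main_ind hq n).2]; rfl⟩
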